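/- Let k ≥ 2 and let G be the caterpillar graph on n = 2k vertices: V(G) = {u_1,...,u_k, w_1,...,w_k} with edges {u_i, u_{i+1}} for 1 ≤ i ≤ k−1 and {u_i, w_i} for 1 ≤ i ≤ k. Then any set F of unordered vertex pairs for which (V(G), E(G) △ F) is Hamiltonian satisfies |F| ≥ n/4; in particular, with degree bound d = 3, G is (1/13)-far from being Hamiltonian. -/

import Mathlib

open SimpleGraph

variable {V : Type*}

/-- The closed neighbourhood `N_G(S) = S ∪ {v : v adjacent to some w ∈ S}`. -/
def closedNbhd (G : SimpleGraph V) (S : Set V) : Set V :=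
  S ∪ {v | ∃ w ∈ S, G.Adj v w}

/-- `G` has maximum degree at most `d`. -/
def MaxDegLE (G : SimpleGraph V) (d : ℕ) : Prop :=
  ∀ v, (G.neighborSet v).ncard ≤ d

/-- `G` is `ε`-far from being Hamiltonian (w.r.t. the degree bound `d`):
modifying at most `ε·d·|V|` edges cannot make `G` Hamiltonian. -/
def FarFromHamiltonian [Fintype V] [DecidableEq V] (G : SimpleGraph V) (d : ℕ) (ε : ℝ) : Prop :=
  ∀ F : Finset (Sym2 V), (∀ e ∈ F, ¬ e.IsDiag) →
    (F.card : ℝ) ≤ ε * d * (Fintype.card V) →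
    ¬ (SimpleGraph.fromEdgeSet (symmDiff G.edgeSet (↑F : Set (Sym2 V)))).IsHamiltonian

/-- `G` is `δ`-locally Hamiltonian on the class `C`: for every `S` with `|S| ≤ δ·|V|`
there is a Hamiltonian `H ∈ C` (on the same vertex set, hence of the same order),
a set `T`, and an isomorphism `G[N_G(S)] ≅ H[N_H(T)]` mapping `S` onto `T`. -/
def LocallyHamiltonian [Fintype V] [DecidableEq V] (C : SimpleGraph V → Prop) (δ : ℝ)
    (G : SimpleGraph V) : Prop :=
  ∀ S : Set V, (S.ncard : ℝ) ≤ δ * (Fintype.card V) →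
    ∃ H : SimpleGraph V, C H ∧ H.IsHamiltonian ∧ ∃ T : Set V,
      ∃ φ : (SimpleGraph.induce (closedNbhd G S) G) ≃g (SimpleGraph.induce (closedNbhd H T) H),
        ∀ x : closedNbhd G S, (x : V) ∈ S ↔ ((φ x : V) ∈ T)

/-- `S` witnesses non-Hamiltonicity of `G` among graphs of maximum degree at most `d`:
no Hamiltonian graph `H` of the same order with degree bound `d` admits a set `T` and an
isomorphism `G[N_G(S)] ≅ H[N_H(T)]` mapping `S` onto `T`. -/
def WitnessesNonHamiltonicity [Fintype V] [DecidableEq V] (G : SimpleGraph V) (d : ℕ)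
    (S : Set V) : Prop :=
  ∀ H : SimpleGraph V, H.IsHamiltonian → MaxDegLE H d → ∀ T : Set V,
    ¬ ∃ φ : (SimpleGraph.induce (closedNbhd G S) G) ≃g (SimpleGraph.induce (closedNbhd H T) H),
        ∀ x : closedNbhd G S, (x : V) ∈ S ↔ ((φ x : V) ∈ T)

/-- `E` is `d`-regular. -/
def IsRegularDeg (E : SimpleGraph V) (d : ℕ) : Prop :=
  ∀ v, (E.neighborSet v).ncard = d

/-- The arcs of the directed graph `→E` obtained by replacing each edge by two arcs. -/
abbrev Arc (E : SimpleGraph V) : Type _ := {p : V × V // E.Adj p.1 p.2}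

instance arcDecPred [Fintype V] (E : SimpleGraph V) [DecidableRel E.Adj] :
    DecidablePred (fun p : V × V => E.Adj p.1 p.2) := fun p => ‹DecidableRel E.Adj› p.1 p.2

/-- The vertex set of `G_E`: 31 `a`-vertices per arc and 6 `b`-vertices per vertex. -/
abbrev GEVert (E : SimpleGraph V) : Type _ := (Arc E × Fin 31) ⊕ (V × Fin 6)

/-- For `1 ≤ j ≤ 31`, the vertex `a_j^e` of `G_E`. -/
def aV {E : SimpleGraph V} (e : Arc E) (j : ℕ) : GEVert E :=
  Sum.inl (e, ⟨(j - 1) % 31, by omega⟩)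

/-- For `1 ≤ k ≤ 6`, the vertex `b_k^v` of `G_E`. -/
def bV (E : SimpleGraph V) (v : V) (k : ℕ) : GEVert E :=
  Sum.inr (v, ⟨(k - 1) % 6, by omega⟩)

/-- Adjacency (with 1-based indices) inside the gadget `P(v_1,…,v_31)` (unsymmetrised):
`{v_i, v_{i+1}}` for `1 ≤ i ≤ 30`, `{v_j, v_{j+3}}` for `j ∈ {2,27}`, and
`{v_k, v_{k+5}}` for `k ∈ {6,12,15,21}`. -/
def gadgetRel (i j : ℕ) : Prop :=
  (1 ≤ i ∧ i ≤ 30 ∧ j = i + 1) ∨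
  ((i = 2 ∧ j = 5) ∨ (i = 27 ∧ j = 30) ∨ (i = 6 ∧ j = 11) ∨ (i = 12 ∧ j = 17) ∨
    (i = 15 ∧ j = 20) ∨ (i = 21 ∧ j = 26))

/-- The generating relation for the edges of `G_E`: the gadget edges, the cyclic edges given by
the linear order `f` on arcs, and the link edges (a link from the gadget of an arc `e = (u,v)`
to the gadget of an arc `e' = (v,w)` via `b_1^v,…,b_6^v`). -/
def GERel [Fintype V] (E : SimpleGraph V) [DecidableRel E.Adj]
    (f : Arc E ≃ Fin (Fintype.card (Arc E))) (x y : GEVert E) : Prop :=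
  (∃ (e : Arc E) (i j : ℕ), gadgetRel i j ∧ x = aV e i ∧ y = aV e j) ∨
  (∃ e e' : Arc E, (f e').val = ((f e).val + 1) % (Fintype.card (Arc E)) ∧
      x = aV e 31 ∧ y = aV e' 1) ∨
  (∃ e e' : Arc E, e.1.2 = e'.1.1 ∧
    ((x = aV e 23 ∧ y = aV e' 3) ∨ (x = aV e 18 ∧ y = aV e' 8) ∨
     (x = aV e 29 ∧ y = aV e' 9) ∨ (x = aV e 24 ∧ y = aV e' 14) ∨
     (x = aV e' 5 ∧ y = bV E e.1.2 1) ∨ (x = bV E e.1.2 1 ∧ y = bV E e.1.2 2) ∨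
     (x = bV E e.1.2 2 ∧ y = bV E e.1.2 3) ∨ (x = bV E e.1.2 3 ∧ y = aV e 23) ∨
     (x = aV e 24 ∧ y = bV E e.1.2 4) ∨ (x = bV E e.1.2 4 ∧ y = bV E e.1.2 5) ∨
     (x = bV E e.1.2 5 ∧ y = bV E e.1.2 6) ∨ (x = bV E e.1.2 6 ∧ y = aV e' 12)))

/-- The graph `G_E` of the construction. -/
def GE [Fintype V] (E : SimpleGraph V) [DecidableRel E.Adj]
    (f : Arc E ≃ Fin (Fintype.card (Arc E))) : SimpleGraph (GEVert E) :=
  SimpleGraph.fromRel (GERel E f)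

/-- The list `L` of vertices is a subpath of the closed walk `C`, i.e. it appears (forwards or
reversed) as a sequence of consecutive vertices of `C` (cyclically). -/
def IsSubpath {W : Type*} (G : SimpleGraph W) {x : W} (C : G.Walk x x) (L : List W) : Prop :=
  (∃ i : ℕ, ∀ (j : ℕ) (h : j < L.length), L.get ⟨j, h⟩ = C.getVert ((i + j) % C.length)) ∨
  (∃ i : ℕ, ∀ (j : ℕ) (h : j < L.reverse.length),
      L.reverse.get ⟨j, h⟩ = C.getVert ((i + j) % C.length))

/-- The expansion ratio of `E` is at least `1`: every nonempty `S` with `|S| ≤ |V|/2` has at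
least `|S|` boundary edges. -/
def ExpansionGeOne [Fintype V] (E : SimpleGraph V) : Prop :=
  ∀ S : Set V, S.Nonempty → 2 * S.ncard ≤ Fintype.card V →
    S.ncard ≤ {p : Sym2 V | p ∈ E.edgeSet ∧ ∃ x ∈ S, ∃ y, y ∉ S ∧ p = s(x, y)}.ncard

/-- The caterpillar graph on `2k` vertices: a path `u_1 — ⋯ — u_k` (the `inl` vertices),
where each `u_i` has a pendant vertex `w_i` (the `inr` vertices). -/
def caterpillar (k : ℕ) : SimpleGraph (Fin k ⊕ Fin k) :=
  SimpleGraph.fromRel (fun x y =>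
    (∃ i j : Fin k, x = Sum.inl i ∧ y = Sum.inl j ∧ (j : ℕ) = (i : ℕ) + 1) ∨
    (∃ i : Fin k, x = Sum.inl i ∧ y = Sum.inr i))


private lemma cycle_two_nbrs {W : Type*} {G : SimpleGraph W} {v u : W}
    (c : G.Walk v v) (hc : c.IsCycle)
    (hnb : ∀ x, G.Adj v x → x = u) : False := by
  have hn : ¬ c.Nil := hc.not_nil
  have hdec := c.cons_tail_eq hn
  rw [← hdec] at hc
  rw [SimpleGraph.Walk.cons_isCycle_iff] at hc
  obtain ⟨hpath, hne⟩ := hc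
  have hx : c.getVert 1 = u := hnb _ (c.adj_snd hn)
  set q := c.tail with hq
  have hvu : v ≠ c.getVert 1 := (c.adj_snd hn).ne
  -- q : Walk (c.getVert 1) v
  have hqn : ¬ q.reverse.Nil := SimpleGraph.Walk.not_nil_of_ne hvu.symm.symm
  have hadj2 : G.Adj v (q.reverse.getVert 1) := q.reverse.adj_snd hqn
  have hx2 : q.reverse.getVert 1 = u := hnb _ hadj2
  obtain ⟨w, hw⟩ : ∃ w, q.reverse.getVert 1 = w := ⟨_, rfl⟩
  have hmem : s(v, w) ∈ q.reverse.edges := by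
    rw [← q.reverse.cons_tail_eq hqn, SimpleGraph.Walk.edges_cons]
    exact List.mem_cons.mpr (Or.inl (by rw [← hw]))
  rw [SimpleGraph.Walk.edges_reverse, List.mem_reverse] at hmem
  rw [hw] at hx2
  rw [hx2] at hmem
  refine hne ?_
  have heq : s(v, c.getVert 1) = s(v, u) := by rw [hx]
  rw [heq]
  exact hmem

private lemma caterpillar_nbr_of_inr {k : ℕ} {i : Fin k} {x : Fin k ⊕ Fin k}
    (h : (caterpillar k).Adj (Sum.inr i) x) : x = Sum.inl i := by
  rw [caterpillar, SimpleGraph.fromRel_adj] at h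
  obtain ⟨hne, h | h⟩ := h
  · rcases h with ⟨a, b, hab, _, _⟩ | ⟨a, hab, _⟩ <;> simp at hab
  · rcases h with ⟨a, b, hab, hb, _⟩ | ⟨a, hab, hb⟩
    · simp at hb
    · simp only [Sum.inr.injEq] at hb
      subst hb; exact hab

/-- For `k ≥ 2`, any edge-modification set `F` making the caterpillar on
`n = 2k` vertices Hamiltonian satisfies `|F| ≥ n/4`; in particular, with degree bound `3`,
the caterpillar is `(1/13)`-far from being Hamiltonian. -/
theorem stmt4 (k : ℕ) (hk : 2 ≤ k) :
    (∀ F : Finset (Sym2 (Fin k ⊕ Fin k)), (∀ e ∈ F, ¬ e.IsDiag) →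
      (SimpleGraph.fromEdgeSet
        (symmDiff (caterpillar k).edgeSet (↑F : Set (Sym2 (Fin k ⊕ Fin k))))).IsHamiltonian →
      ((2 * k : ℝ)) / 4 ≤ (F.card : ℝ)) ∧
    FarFromHamiltonian (caterpillar k) 3 (1 / 13) := by
  have main : ∀ F : Finset (Sym2 (Fin k ⊕ Fin k)), (∀ e ∈ F, ¬ e.IsDiag) →
      (SimpleGraph.fromEdgeSet
        (symmDiff (caterpillar k).edgeSet (↑F : Set (Sym2 (Fin k ⊕ Fin k))))).IsHamiltonian →
      ((2 * k : ℝ)) / 4 ≤ (F.card : ℝ) := by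
    intro F hF hHam
    set G' := SimpleGraph.fromEdgeSet
      (symmDiff (caterpillar k).edgeSet (↑F : Set (Sym2 (Fin k ⊕ Fin k)))) with hG'
    -- every pendant vertex is covered by F
    have hcov : ∀ i : Fin k, ∃ e ∈ F, (Sum.inr i : Fin k ⊕ Fin k) ∈ e := by
      intro i
      by_contra hno
      push_neg at hno
      have hcard1 : Fintype.card (Fin k ⊕ Fin k) ≠ 1 := by
        simp only [Fintype.card_sum, Fintype.card_fin]; omega
      obtain ⟨a, p, hp⟩ := hHam hcard1
      have hv : (Sum.inr i : Fin k ⊕ Fin k) ∈ p.support := hp.mem_support _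
      have hc : (p.rotate _ hv).IsCycle := hp.isCycle.rotate hv
      refine cycle_two_nbrs (u := (Sum.inl i : Fin k ⊕ Fin k)) (p.rotate _ hv) hc ?_
      intro x hx
      rw [hG', SimpleGraph.fromEdgeSet_adj] at hx
      obtain ⟨hmem, hne⟩ := hx
      rw [Set.mem_symmDiff] at hmem
      rcases hmem with ⟨hmem, _⟩ | ⟨hmem, _⟩
      · exact caterpillar_nbr_of_inr hmem
      · exact absurd (Sym2.mem_mk_left _ _) (hno _ hmem)
    choose g hg1 hg2 using hcov
    have hcount : (Finset.univ : Finset (Fin k)).card ≤ 2 * F.card := by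
      refine Finset.card_le_mul_card_image_of_maps_to (f := g) (fun i _ => hg1 i) 2 ?_
      intro e _
      induction e using Sym2.ind with
      | _ a b =>
        calc (Finset.univ.filter fun i => g i = s(a, b)).card
            ≤ ({a, b} : Finset (Fin k ⊕ Fin k)).card := by
              refine Finset.card_le_card_of_injOn (fun i => Sum.inr i) ?_ ?_
              · intro i hi
                simp only [Finset.mem_coe, Finset.mem_filter] at hi
                have := hg2 i
                rw [hi.2, Sym2.mem_iff] at this
                simpa using this
              · intro i _ j _ h
                exact Sum.inr.injEq _ _ ▸ h
          _ ≤ 2 := Finset.card_insert_le _ _ |>.trans (by simp)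
    simp only [Finset.card_univ, Fintype.card_fin] at hcount
    have : (k : ℝ) ≤ 2 * F.card := by exact_mod_cast hcount
    linarith
  refine ⟨main, ?_⟩
  intro F hF hcard hHam
  have h1 := main F hF hHam
  have hk' : (2 : ℝ) ≤ (k : ℝ) := by exact_mod_cast hk
  rw [Fintype.card_sum, Fintype.card_fin] at hcard
  push_cast at hcard
  linarith
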